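/- Let G be a finite group, N ⊴ G, x, y ∈ N noncentral elements of G with x a p-element and y a q-element (p, q primes). Suppose every G-class of N has size coprime to |x^G| or to |y^G|. Then p = q if and only if xy = yx. -/

import Mathlib

def classSet {G : Type*} [Group G] (x : G) : Set G := {y | IsConj x y}

noncomputable def classSize {G : Type*} [Group G] (x : G) : ℕ := Nat.card (classSet x)

lemma classSize_eq_index {G : Type*} [Group G] (x : G) :
    classSize x = (Subgroup.centralizer {x}).index := by
  have h1 : classSet x = MulAction.orbit (ConjAct G) x := by
    ext g
    rw [ConjAct.mem_orbit_conjAct]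
    exact isConj_comm
  rw [classSize, h1, Nat.card_congr (MulAction.orbitEquivQuotientStabilizer (ConjAct G) x),
    ← Subgroup.index_eq_card, Subgroup.centralizer_eq_comap_stabilizer]
  exact (Subgroup.index_comap_of_surjective _ (MulEquiv.surjective _)).symm

lemma classSize_eq_one {G : Type*} [Group G] [Finite G] (x : G) :
    classSize x = 1 ↔ x ∈ Subgroup.center G := by
  rw [classSize_eq_index, Subgroup.index_eq_one]
  constructor
  · intro h
    rw [Subgroup.mem_center_iff]
    intro g
    have : g ∈ Subgroup.centralizer {x} := h ▸ Subgroup.mem_top g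
    exact (Subgroup.mem_centralizer_iff.mp this x rfl).symm ▸ rfl
  · intro h
    rw [eq_top_iff]
    intro g _
    rw [Subgroup.mem_centralizer_iff]
    rintro y rfl
    exact (Subgroup.mem_center_iff.mp h g).symm

lemma coprime_index_mul {G : Type*} [Group G] [Finite G] (H K : Subgroup G)
    (hco : Nat.Coprime H.index K.index) (g : G) :
    ∃ k ∈ K, ∃ h ∈ H, g = k * h := by
  classical
  have hne : H.index ≠ 0 := Subgroup.index_ne_zero_of_finite
  have hdvd : H.index * K.index ∣ (H ⊓ K).index :=
    hco.mul_dvd_of_dvd_of_dvd (Subgroup.index_dvd_of_le inf_le_left)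
      (Subgroup.index_dvd_of_le inf_le_right)
  have hle : (H ⊓ K).index ≤ H.index * K.index := Subgroup.index_inf_le
  have hinfne : (H ⊓ K).index ≠ 0 := Subgroup.index_ne_zero_of_finite
  have heq : (H ⊓ K).index = H.index * K.index :=
    le_antisymm hle (Nat.le_of_dvd (Nat.pos_of_ne_zero hinfne) hdvd)
  have hrel : K.relIndex H * H.index = H.index * K.index := by
    rw [← Subgroup.inf_relIndex_left, Subgroup.relIndex_mul_index inf_le_left, heq]
  have hrel2 : K.relIndex H = K.index :=
    Nat.eq_of_mul_eq_mul_right (Nat.pos_of_ne_zero hne) (hrel.trans (Nat.mul_comm _ _))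
  have hstab : MulAction.stabilizer H ((1 : G) : G ⧸ K) = K.subgroupOf H := by
    ext h
    rw [MulAction.mem_stabilizer_iff, Subgroup.mem_subgroupOf]
    have : h • ((1 : G) : G ⧸ K) = (((h : G) * 1 : G) : G ⧸ K) := rfl
    rw [this, mul_one, QuotientGroup.eq]
    simp
  have horb : Nat.card (MulAction.orbit H ((1 : G) : G ⧸ K)) = Nat.card (G ⧸ K) := by
    rw [Nat.card_congr (MulAction.orbitEquivQuotientStabilizer H ((1 : G) : G ⧸ K)),
      ← Subgroup.index_eq_card, hstab]
    rw [← Subgroup.index_eq_card K, ← hrel2]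
    rfl
  have huniv : MulAction.orbit H ((1 : G) : G ⧸ K) = Set.univ := by
    apply Set.eq_of_subset_of_ncard_le (Set.subset_univ _)
    rw [Set.ncard_univ, ← Nat.card_coe_set_eq, horb]
  have hmem : ((g⁻¹ : G) : G ⧸ K) ∈ MulAction.orbit H ((1 : G) : G ⧸ K) := by
    rw [huniv]; trivial
  obtain ⟨h, hh⟩ := hmem
  have h4 : (((h : G) * 1 : G) : G ⧸ K) = ((g⁻¹ : G) : G ⧸ K) := hh
  rw [mul_one] at h4
  rw [QuotientGroup.eq] at h4
  refine ⟨((h : G)⁻¹ * g⁻¹)⁻¹, K.inv_mem h4, (h : G)⁻¹, H.inv_mem h.2, ?_⟩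
  group

lemma key_commute {G : Type*} [Group G] [Finite G] (p : ℕ) (hp : p.Prime) (x y : G)
    (hyp : ∃ b : ℕ, orderOf y = p ^ b)
    (hco : Nat.Coprime ((Subgroup.centralizer {x}).index) ((Subgroup.centralizer {y}).index))
    (hnd : ¬ p ∣ (Subgroup.centralizer {x}).index) : Commute x y := by
  classical
  haveI : Fact p.Prime := ⟨hp⟩
  set H := Subgroup.centralizer {x} with hH
  obtain ⟨R⟩ : Nonempty (Sylow p H) := inferInstance
  set K := (R : Subgroup H).map H.subtype with hK
  have hKp : IsPGroup p K := R.isPGroup'.map H.subtype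
  obtain ⟨P, hKP⟩ := hKp.exists_le_sylow
  have hcardK : Nat.card K = Nat.card R :=
    (Nat.card_congr ((R : Subgroup H).equivMapOfInjective H.subtype H.subtype_injective).toEquiv).symm
  have hfacteq : (Nat.card G).factorization p = (Nat.card H).factorization p := by
    have hGcard : Nat.card H * H.index = Nat.card G := Subgroup.card_mul_index H
    have h1 : Nat.card H ≠ 0 := Nat.card_pos.ne'
    have h2 : H.index ≠ 0 := Subgroup.index_ne_zero_of_finite
    rw [← hGcard, Nat.factorization_mul h1 h2, Finsupp.add_apply,
      Nat.factorization_eq_zero_of_not_dvd hnd, add_zero]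
  have hcardP : Nat.card K = Nat.card P := by
    rw [hcardK, R.card_eq_multiplicity, P.card_eq_multiplicity, hfacteq]
  have hKP' : K = (P : Subgroup G) := Subgroup.eq_of_le_of_card_ge hKP (le_of_eq hcardP.symm)
  have hPH : (P : Subgroup G) ≤ H := by
    rw [← hKP']
    exact Subgroup.map_subtype_le _
  obtain ⟨b, hb⟩ := hyp
  have hyP : IsPGroup p (Subgroup.zpowers y) := by
    apply IsPGroup.of_card
    rw [Nat.card_zpowers, hb]
  obtain ⟨Q, hQ⟩ := hyP.exists_le_sylow
  have hyQ : y ∈ Q := hQ (Subgroup.mem_zpowers y)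
  obtain ⟨g, hg⟩ := MulAction.exists_smul_eq G P Q
  have h1 : y ∈ (g • P : Sylow p G) := hg ▸ hyQ
  have h1' : y ∈ ((g • P : Sylow p G) : Subgroup G) := h1
  have h2 : g⁻¹ * y * g ∈ (P : Subgroup G) := by
    rw [Sylow.coe_subgroup_smul, Subgroup.mem_pointwise_smul_iff_inv_smul_mem] at h1'
    convert h1' using 1
    rw [MulAut.smul_def, MulAut.conj_inv_apply]
  have hc1 : Commute x (g⁻¹ * y * g) := Subgroup.mem_centralizer_iff.mp (hPH h2) x rfl
  -- factor g = d * c with d ∈ C(y), c ∈ C(x)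
  obtain ⟨d, hd, c, hc, hgdc⟩ :=
    coprime_index_mul (Subgroup.centralizer {x}) (Subgroup.centralizer {y}) hco g
  have hdy : y * d = d * y := Subgroup.mem_centralizer_iff.mp hd y rfl
  have hcx : x * c = c * x := Subgroup.mem_centralizer_iff.mp hc x rfl
  have hred : g⁻¹ * y * g = c⁻¹ * y * c := by
    rw [hgdc]
    have : d⁻¹ * y * d = y := by
      rw [mul_assoc, hdy, inv_mul_cancel_left]
    calc (d * c)⁻¹ * y * (d * c) = c⁻¹ * (d⁻¹ * y * d) * c := by group
    _ = c⁻¹ * y * c := by rw [this]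
  rw [hred] at hc1
  -- conjugate back by c
  have hmap := hc1.map (MulAut.conj c).toMonoidHom
  simp only [MulEquiv.coe_toMonoidHom, MulAut.conj_apply] at hmap
  have e1 : c * x * c⁻¹ = x := by rw [← hcx, mul_inv_cancel_right]
  have e2 : c * (c⁻¹ * y * c) * c⁻¹ = y := by group
  rwa [e1, e2] at hmap

theorem stmt12 {G : Type*} [Group G] [Finite G] (N : Subgroup G) (hN : N.Normal)
    (p q : ℕ) (hp : p.Prime) (hq : q.Prime) (x y : G) (hx : x ∈ N) (hy : y ∈ N)
    (hxc : x ∉ Subgroup.center G) (hyc : y ∉ Subgroup.center G)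
    (hxp : ∃ a : ℕ, orderOf x = p ^ a) (hyq : ∃ b : ℕ, orderOf y = q ^ b)
    (hcl : ∀ z ∈ N, Nat.Coprime (classSize z) (classSize x) ∨
      Nat.Coprime (classSize z) (classSize y)) :
    p = q ↔ Commute x y := by
  classical
  have hx1 : classSize x ≠ 1 := fun h => hxc ((classSize_eq_one x).mp h)
  have hy1 : classSize y ≠ 1 := fun h => hyc ((classSize_eq_one y).mp h)
  have hco : Nat.Coprime (classSize x) (classSize y) := by
    rcases hcl x hx with h | h
    · exact absurd ((Nat.coprime_self _).mp h) hx1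
    · exact h
  constructor
  · intro hpq
    subst hpq
    rw [classSize_eq_index, classSize_eq_index] at hco
    by_cases hd : p ∣ (Subgroup.centralizer {x}).index
    · have hnd : ¬ p ∣ (Subgroup.centralizer {y}).index := by
        intro h2
        have h3 : p ∣ Nat.gcd (Subgroup.centralizer {x}).index
            (Subgroup.centralizer {y}).index := Nat.dvd_gcd hd h2
        rw [Nat.Coprime] at hco
        rw [hco] at h3
        exact hp.one_lt.ne' (Nat.dvd_one.mp h3)
      exact (key_commute p hp y x hxp hco.symm hnd).symm
    · exact key_commute p hp x y hyq hco hd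
  · intro hcomm
    by_contra hpq
    obtain ⟨a, ha⟩ := hxp
    obtain ⟨b, hb⟩ := hyq
    have hno : Nat.Coprime (orderOf x) (orderOf y) := by
      rw [ha, hb]
      exact ((Nat.coprime_primes hp hq).mpr hpq).pow a b
    -- x is a power of x*y
    obtain ⟨k, hk⟩ := Nat.chineseRemainder hno 1 0
    obtain ⟨l, hl⟩ := Nat.chineseRemainder hno 0 1
    have hxk : (x * y) ^ k = x := by
      rw [hcomm.mul_pow]
      have h1 : x ^ k = x ^ 1 := pow_eq_pow_iff_modEq.mpr hk.1
      have h2 : y ^ k = y ^ 0 := pow_eq_pow_iff_modEq.mpr hk.2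
      rw [h1, h2, pow_one, pow_zero, mul_one]
    have hyl : (x * y) ^ l = y := by
      rw [hcomm.mul_pow]
      have h1 : x ^ l = x ^ 0 := pow_eq_pow_iff_modEq.mpr hl.1
      have h2 : y ^ l = y ^ 1 := pow_eq_pow_iff_modEq.mpr hl.2
      rw [h1, h2, pow_one, pow_zero, one_mul]
    have hlex : Subgroup.centralizer {x * y} ≤ Subgroup.centralizer {x} := by
      intro g hg
      have hcg : Commute (x * y) g := Subgroup.mem_centralizer_iff.mp hg (x * y) rfl
      have : Commute x g := hxk ▸ hcg.pow_left k
      rw [Subgroup.mem_centralizer_iff]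
      rintro z rfl
      exact this.eq
    have hley : Subgroup.centralizer {x * y} ≤ Subgroup.centralizer {y} := by
      intro g hg
      have hcg : Commute (x * y) g := Subgroup.mem_centralizer_iff.mp hg (x * y) rfl
      have : Commute y g := hyl ▸ hcg.pow_left l
      rw [Subgroup.mem_centralizer_iff]
      rintro z rfl
      exact this.eq
    have hdx : classSize x ∣ classSize (x * y) := by
      rw [classSize_eq_index, classSize_eq_index]
      exact Subgroup.index_dvd_of_le hlex
    have hdy : classSize y ∣ classSize (x * y) := by
      rw [classSize_eq_index, classSize_eq_index]
      exact Subgroup.index_dvd_of_le hley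
    rcases hcl (x * y) (N.mul_mem hx hy) with h | h
    · exact hx1 (Nat.Coprime.eq_one_of_dvd h.symm hdx)
    · exact hy1 (Nat.Coprime.eq_one_of_dvd h.symm hdy)
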